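/- Let U ∈ ℝ^{m×m} be symmetric and γ > 0. If |U_{ij}| > γ/2 for some pair i ≠ j, then the function S ↦ γ·h₁(S) − tr(S(U − I)), defined on symmetric matrices S ∈ ℝ^{m×m}, is unbounded below. -/
import Mathlib


open Matrix Real

/-- The sparsity penalty `h₁(Y) = ∑_{h<k} |Y_{hk}|`. -/
noncomputable def h1 {m : ℕ} (Y : Matrix (Fin m) (Fin m) ℝ) : ℝ :=
  ∑ p : Fin m × Fin m, if p.1 < p.2 then |Y p.1 p.2| else 0

lemma stmt_3_aux {m : ℕ} (U : Matrix (Fin m) (Fin m) ℝ) (hU : U.IsSymm)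
    (γ : ℝ) (hγ : 0 < γ) (i j : Fin m) (hij : i < j) (h : γ / 2 < |U i j|) :
    ∀ c : ℝ, ∃ S : Matrix (Fin m) (Fin m) ℝ, S.IsSymm ∧
      γ * h1 S - (S * (U - 1)).trace < c := by
  intro c
  have hne : i ≠ j := hij.ne
  set s : ℝ := if 0 ≤ U i j then 1 else -1 with hs
  have hsU : s * U i j = |U i j| := by
    rcases le_or_gt 0 (U i j) with h0 | h0
    · simp [hs, h0, abs_of_nonneg h0]
    · simp [hs, not_le.2 h0, abs_of_neg h0]
  have habs : |s| = 1 := by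
    rcases le_or_gt 0 (U i j) with h0 | h0
    · simp [hs, h0]
    · simp [hs, not_le.2 h0]
  have hden : 0 < 2 * |U i j| - γ := by linarith
  set t : ℝ := (|c| + 1) / (2 * |U i j| - γ) with ht
  have ht0 : 0 < t := div_pos (by positivity) hden
  set S : Matrix (Fin m) (Fin m) ℝ :=
    Matrix.of fun a b => if (a = i ∧ b = j) ∨ (a = j ∧ b = i) then t * s else 0 with hS
  have hSsymm : S.IsSymm := by
    ext a b
    simp only [hS, Matrix.transpose_apply, Matrix.of_apply]
    exact if_congr (by tauto) rfl rfl
  have hh1 : h1 S = t := by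
    rw [h1, Fintype.sum_eq_single (i, j)]
    · simp only [hS, Matrix.of_apply, hij, if_pos, and_self, true_or, if_true]
      rw [abs_mul, habs, abs_of_pos ht0, mul_one]
    · intro p hp
      by_cases hlt : p.1 < p.2
      · rw [if_pos hlt]
        have : S p.1 p.2 = 0 := by
          simp only [hS, Matrix.of_apply]
          rw [if_neg]
          rintro (⟨h1, h2⟩ | ⟨h1, h2⟩)
          · exact hp (Prod.ext h1 h2)
          · rw [h1, h2] at hlt; exact absurd hlt (not_lt.2 hij.le)
        rw [this, abs_zero]
      · rw [if_neg hlt]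
  have hUji : U j i = U i j := by
    have := congrFun (congrFun hU i) j
    simpa [Matrix.transpose_apply] using this
  have htr : (S * (U - 1)).trace = 2 * t * |U i j| := by
    have h1' : (S * (U - 1)).trace = ∑ p : Fin m × Fin m, S p.1 p.2 * (U - 1) p.2 p.1 := by
      rw [Matrix.trace, Fintype.sum_prod_type]
      simp [Matrix.diag, Matrix.mul_apply]
    rw [h1']
    have hzero : ∀ p ∈ (Finset.univ : Finset (Fin m × Fin m)),
        p ∉ ({(i, j), (j, i)} : Finset (Fin m × Fin m)) →
        S p.1 p.2 * (U - 1) p.2 p.1 = 0 := by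
      intro p _ hp
      simp only [Finset.mem_insert, Finset.mem_singleton] at hp
      push_neg at hp
      have : S p.1 p.2 = 0 := by
        simp only [hS, Matrix.of_apply]
        rw [if_neg]
        rintro (⟨h1, h2⟩ | ⟨h1, h2⟩)
        · exact hp.1 (Prod.ext h1 h2)
        · exact hp.2 (Prod.ext h1 h2)
      rw [this, zero_mul]
    rw [← Finset.sum_subset (Finset.subset_univ _) hzero,
      Finset.sum_pair (by simp [hne] : ((i, j) : Fin m × Fin m) ≠ (j, i))]
    have e1 : S i j = t * s := by simp [hS]
    have e2 : S j i = t * s := by simp [hS]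
    have e3 : (U - 1) j i = U i j := by
      simp [Matrix.sub_apply, Matrix.one_apply, hne.symm, hUji]
    have e4 : (U - 1) i j = U i j := by
      simp [Matrix.sub_apply, Matrix.one_apply, hne]
    rw [e1, e2, e3, e4, show t * s * U i j + t * s * U i j = 2 * t * (s * U i j) by ring,
      hsU]
  refine ⟨S, hSsymm, ?_⟩
  rw [hh1, htr]
  have key : t * (2 * |U i j| - γ) = |c| + 1 := div_mul_cancel₀ _ (ne_of_gt hden)
  nlinarith [neg_abs_le c]

/-- If `U` is symmetric and `|U_{ij}| > γ/2` for some off-diagonal pair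
`i ≠ j`, then `S ↦ γ·h₁(S) − tr(S(U − I))` is unbounded below over symmetric `S`. -/
theorem stmt_3 {m : ℕ} (U : Matrix (Fin m) (Fin m) ℝ) (hU : U.IsSymm)
    (γ : ℝ) (hγ : 0 < γ) (i j : Fin m) (hij : i ≠ j) (h : γ / 2 < |U i j|) :
    ∀ c : ℝ, ∃ S : Matrix (Fin m) (Fin m) ℝ, S.IsSymm ∧
      γ * h1 S - (S * (U - 1)).trace < c := by
  rcases lt_or_gt_of_ne hij with hlt | hgt
  · exact stmt_3_aux U hU γ hγ i j hlt h
  · have hUji : U j i = U i j := by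
      have := congrFun (congrFun hU i) j
      simpa [Matrix.transpose_apply] using this
    exact stmt_3_aux U hU γ hγ j i hgt (by rwa [hUji])
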